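/- The period function T(z) = 2∫_{x^min(z)}^{x^max(z)} dx/√(x²(1-x)² - 4zx) converges to 2π√3 as z → (1/27)^-. -/

import Mathlib

set_option linter.unusedSectionVars false

open Set Real Filter

/-- θ(w) ∈ (0,π) with cos θ(w) = 2w - 1. -/
noncomputable def theta (w : ℝ) : ℝ := Real.arccos (2 * w - 1)

/-- Smallest root of x(1-x)² = 4z in (0,1). -/
noncomputable def xminf (z : ℝ) : ℝ := (2 / 3) * (1 - Real.sin (theta (27 * z) / 3 + π / 6))

/-- Largest root of x(1-x)² = 4z in (0,1). -/
noncomputable def xmaxf (z : ℝ) : ℝ := (2 / 3) * (1 + Real.sin (theta (27 * z) / 3 - π / 6))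

/-- The period function T(z) = 2∫_{xmin(z)}^{xmax(z)} dx/√(x²(1-x)² - 4zx). -/
noncomputable def Tfun (z : ℝ) : ℝ :=
  2 * ∫ x in xminf z..xmaxf z, 1 / Real.sqrt (x ^ 2 * (1 - x) ^ 2 - 4 * z * x)

noncomputable def xaddf (z : ℝ) : ℝ := (2 / 3) * (1 + Real.cos (theta (27 * z) / 3))

noncomputable def Kf (t : ℝ) : ℝ := 1 / Real.sqrt (t * (1 - t))

section Kpart
open intervalIntegral MeasureTheory

lemma Kf_meas : Measurable Kf := by
  unfold Kf
  simp only [one_div]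
  exact (Real.continuous_sqrt.comp (by continuity)).measurable.inv

lemma Kf_nonneg (t : ℝ) : 0 ≤ Kf t := by
  unfold Kf; positivity

lemma Kf_int_half : IntervalIntegrable Kf volume 0 (1/2) := by
  have hbound : IntervalIntegrable (fun t : ℝ => Real.sqrt 2 * t ^ (-(1:ℝ)/2)) volume 0 (1/2) :=
    (intervalIntegral.intervalIntegrable_rpow' (by norm_num)).const_mul _
  refine hbound.mono_fun' Kf_meas.aestronglyMeasurable ?_
  rw [Filter.EventuallyLE, ae_restrict_iff' measurableSet_uIoc]
  refine Filter.Eventually.of_forall fun t ht => ?_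
  rw [Set.uIoc_of_le (by norm_num : (0:ℝ) ≤ 1/2)] at ht
  obtain ⟨ht0, ht1⟩ := ht
  rw [Real.norm_of_nonneg (Kf_nonneg t)]
  have h1 : (1:ℝ)/2 ≤ 1 - t := by linarith
  have h2 : 0 < t * (1 - t) := by nlinarith
  have h3 : t / 2 ≤ t * (1 - t) := by nlinarith
  have h4 : Real.sqrt (t / 2) ≤ Real.sqrt (t * (1 - t)) := Real.sqrt_le_sqrt h3
  have h5 : 0 < Real.sqrt (t / 2) := Real.sqrt_pos.2 (by linarith)
  have h6 : Kf t ≤ 1 / Real.sqrt (t / 2) := by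
    unfold Kf
    exact one_div_le_one_div_of_le h5 h4
  refine h6.trans (le_of_eq ?_)
  have hs2 : Real.sqrt (t / 2) = Real.sqrt t / Real.sqrt 2 := Real.sqrt_div ht0.le 2
  have hrt : t ^ (-(1:ℝ)/2) = (Real.sqrt t)⁻¹ := by
    rw [show (-(1:ℝ)/2) = -(1/2) by norm_num, Real.rpow_neg ht0.le, ← Real.sqrt_eq_rpow]
  have h2pos : (0:ℝ) < Real.sqrt 2 := Real.sqrt_pos.2 (by norm_num)
  have htpos : (0:ℝ) < Real.sqrt t := Real.sqrt_pos.2 ht0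
  rw [hs2, hrt]
  field_simp

lemma Kf_symm (t : ℝ) : Kf (1 - t) = Kf t := by
  unfold Kf
  ring_nf

lemma Kf_int : IntervalIntegrable Kf volume 0 1 := by
  refine (Kf_int_half).trans ?_
  have h := Kf_int_half.comp_sub_left 1
  have : (fun x => Kf (1 - x)) = Kf := funext Kf_symm
  rw [this] at h
  norm_num at h
  exact h.symm

lemma Kf_integral : ∫ t in (0:ℝ)..1, Kf t = π := by
  have hderiv : ∀ t ∈ Ioo (0:ℝ) 1,
      HasDerivWithinAt (fun t => Real.arcsin (2 * t - 1)) (Kf t) (Ioi t) t := by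
    intro t ht
    obtain ⟨ht0, ht1⟩ := ht
    have h1 : (2 * t - 1 : ℝ) ≠ -1 := by intro h; nlinarith [h]
    have h2 : (2 * t - 1 : ℝ) ≠ 1 := by intro h; nlinarith [h]
    have ha := (Real.hasDerivAt_arcsin h1 h2).comp t
      (((hasDerivAt_id t).const_mul 2).sub_const 1)
    have harg : 1 - (2 * t - 1) ^ 2 = 4 * (t * (1 - t)) := by ring
    have hsq : Real.sqrt (1 - (2 * t - 1) ^ 2) = 2 * Real.sqrt (t * (1 - t)) := by
      rw [harg, show (4 : ℝ) * (t * (1 - t)) = 2 ^ 2 * (t * (1 - t)) by norm_num,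
        Real.sqrt_mul (by positivity), Real.sqrt_sq (by norm_num : (0:ℝ) ≤ 2)]
    have hpos : 0 < Real.sqrt (t * (1 - t)) := Real.sqrt_pos.2 (by nlinarith)
    have hprod : (0:ℝ) < Real.sqrt t * Real.sqrt (1 - t) := by
      rw [← Real.sqrt_mul ht0.le]; exact hpos
    have : (1 / Real.sqrt (1 - (2 * t - 1) ^ 2)) * (2 * 1) = Kf t := by
      rw [hsq]; unfold Kf; field_simp
    rw [← this]
    exact ha.hasDerivWithinAt
  have hcont : ContinuousOn (fun t : ℝ => Real.arcsin (2 * t - 1)) (Icc 0 1) :=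
    (Real.continuous_arcsin.comp (by continuity)).continuousOn
  have := intervalIntegral.integral_eq_sub_of_hasDeriv_right_of_le zero_le_one hcont hderiv Kf_int
  rw [this]
  norm_num [Real.arcsin_one, Real.arcsin_neg_one]

end Kpart

section roots
variable {z : ℝ} (hz : 0 < z) (hz' : z < 1/27)
include hz hz'

lemma s_pos : 0 < theta (27 * z) / 3 := by
  have : 0 < theta (27 * z) := Real.arccos_pos.2 (by nlinarith)
  linarith

lemma s_lt : theta (27 * z) / 3 < π / 3 := by
  have h : theta (27 * z) ≠ π := by
    unfold theta; rw [Ne, Real.arccos_eq_pi]; nlinarith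
  have h2 : theta (27 * z) ≤ π := Real.arccos_le_pi _
  have := lt_of_le_of_ne h2 h
  linarith

lemma cos_three_s : Real.cos (3 * (theta (27 * z) / 3)) = 54 * z - 1 := by
  rw [show 3 * (theta (27 * z) / 3) = theta (27 * z) by ring]
  unfold theta
  rw [Real.cos_arccos (by nlinarith) (by nlinarith)]
  ring

lemma xminf_eq : xminf z = 2/3 - (Real.sqrt 3 / 3) * Real.sin (theta (27 * z) / 3)
    - (1/3) * Real.cos (theta (27 * z) / 3) := by
  unfold xminf
  rw [Real.sin_add, Real.sin_pi_div_six, Real.cos_pi_div_six]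
  ring

lemma xmaxf_eq : xmaxf z = 2/3 + (Real.sqrt 3 / 3) * Real.sin (theta (27 * z) / 3)
    - (1/3) * Real.cos (theta (27 * z) / 3) := by
  unfold xmaxf
  rw [Real.sin_sub, Real.sin_pi_div_six, Real.cos_pi_div_six]
  ring

lemma vieta1 : xminf z + xmaxf z + xaddf z = 2 := by
  rw [xminf_eq hz hz', xmaxf_eq hz hz']; unfold xaddf; ring

lemma vieta2 : xminf z * xmaxf z + xmaxf z * xaddf z + xaddf z * xminf z = 1 := by
  rw [xminf_eq hz hz', xmaxf_eq hz hz']; unfold xaddf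
  have sq3 : Real.sqrt 3 ^ 2 = 3 := Real.sq_sqrt (by norm_num)
  have pyth : Real.sin (theta (27 * z) / 3) ^ 2 + Real.cos (theta (27 * z) / 3) ^ 2 = 1 :=
    Real.sin_sq_add_cos_sq _
  linear_combination (-(Real.sin (theta (27 * z) / 3) ^ 2) / 9) * sq3 + (-(1:ℝ)/3) * pyth

lemma vieta3 : xminf z * xmaxf z * xaddf z = 4 * z := by
  rw [xminf_eq hz hz', xmaxf_eq hz hz']; unfold xaddf
  have sq3 : Real.sqrt 3 ^ 2 = 3 := Real.sq_sqrt (by norm_num)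
  have pyth : Real.sin (theta (27 * z) / 3) ^ 2 + Real.cos (theta (27 * z) / 3) ^ 2 = 1 :=
    Real.sin_sq_add_cos_sq _
  have tri : 4 * Real.cos (theta (27 * z) / 3) ^ 3 - 3 * Real.cos (theta (27 * z) / 3)
      = 54 * z - 1 := by
    rw [← Real.cos_three_mul]; exact cos_three_s hz hz'
  set C := Real.cos (theta (27 * z) / 3)
  set S := Real.sin (theta (27 * z) / 3)
  linear_combination (-(S^2) * (2 + 2*C) / 27) * sq3 + (-(2 + 2*C)/9) * pyth + ((2:ℝ)/27) * tri

lemma factor_eq (x : ℝ) : x ^ 2 * (1 - x) ^ 2 - 4 * z * x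
    = x * (x - xminf z) * ((xmaxf z - x) * (xaddf z - x)) := by
  linear_combination (x^3) * vieta1 hz hz' - (x^2) * vieta2 hz hz' + x * vieta3 hz hz'

lemma xminf_pos : 0 < xminf z := by
  have h1 : Real.sin (theta (27 * z) / 3 + π / 6) < 1 := by
    rw [← Real.sin_pi_div_two]
    apply Real.strictMonoOn_sin ⟨by nlinarith [s_pos hz hz', pi_pos], by nlinarith [s_lt hz hz']⟩
      ⟨by nlinarith [pi_pos], le_refl _⟩
    nlinarith [s_lt hz hz']
  unfold xminf; nlinarith

lemma xlt : xminf z < xmaxf z := by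
  rw [xminf_eq hz hz', xmaxf_eq hz hz']
  have h1 : 0 < Real.sin (theta (27 * z) / 3) :=
    Real.sin_pos_of_pos_of_lt_pi (s_pos hz hz') (by nlinarith [s_lt hz hz', pi_pos])
  have h2 : 0 < Real.sqrt 3 := Real.sqrt_pos.2 (by norm_num)
  nlinarith

lemma xlt' : xmaxf z < xaddf z := by
  rw [xmaxf_eq hz hz']; unfold xaddf
  have sq3 : Real.sqrt 3 ^ 2 = 3 := Real.sq_sqrt (by norm_num)
  have h2 : 0 < Real.sqrt 3 := Real.sqrt_pos.2 (by norm_num)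
  have hc : (1:ℝ)/2 < Real.cos (theta (27 * z) / 3) := by
    rw [← Real.cos_pi_div_three]
    apply Real.strictAntiOn_cos
      ⟨by nlinarith [s_pos hz hz'], by nlinarith [s_lt hz hz', pi_pos]⟩
      ⟨by positivity, by nlinarith [pi_pos]⟩ (s_lt hz hz')
  have hs : Real.sin (theta (27 * z) / 3) < Real.sqrt 3 / 2 := by
    rw [← Real.sin_pi_div_three]
    apply Real.strictMonoOn_sin
      ⟨by nlinarith [s_pos hz hz', pi_pos], by nlinarith [s_lt hz hz', pi_pos]⟩
      ⟨by nlinarith [pi_pos], by nlinarith [pi_pos]⟩ (s_lt hz hz')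
  nlinarith

end roots
section bound
open intervalIntegral MeasureTheory

variable {z : ℝ} (hz : 0 < z) (hz' : z < 1/27)
include hz hz'

set_option maxHeartbeats 1000000 in
lemma Tfun_bounds :
    2 * π / Real.sqrt (xmaxf z * (xaddf z - xminf z)) ≤ Tfun z ∧
    Tfun z ≤ 2 * π / Real.sqrt (xminf z * (xaddf z - xmaxf z)) := by
  have ha : 0 < xminf z := xminf_pos hz hz'
  have hab : xminf z < xmaxf z := xlt hz hz'
  have hbc : xmaxf z < xaddf z := xlt' hz hz'
  set a := xminf z with hadef
  set b := xmaxf z with hbdef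
  set c := xaddf z with hcdef
  set d := b - a with hddef
  have hd : 0 < d := sub_pos.2 hab
  set m := a * (c - b) with hmdef
  set M := b * (c - a) with hMdef
  have hm : 0 < m := mul_pos ha (sub_pos.2 hbc)
  have hM : 0 < M := mul_pos (ha.trans hab) (by linarith)
  set g : ℝ → ℝ := fun t => (d * t + a) * (c - (d * t + a)) with hgdef
  have hx12 : ∀ t ∈ Icc (0:ℝ) 1, a ≤ d * t + a ∧ d * t + a ≤ b := by
    intro t ⟨ht0, ht1⟩
    constructor
    · nlinarith
    · nlinarith
  have hgb : ∀ t ∈ Icc (0:ℝ) 1, m ≤ g t ∧ g t ≤ M := by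
    intro t ht
    obtain ⟨hx1, hx2⟩ := hx12 t ht
    refine ⟨?_, ?_⟩
    · have h1 : 0 ≤ (d * t + a - a) * (c - (d * t + a)) :=
        mul_nonneg (by linarith) (by linarith)
      have h2 : 0 ≤ a * (b - (d * t + a)) := mul_nonneg ha.le (by linarith)
      show a * (c - b) ≤ (d * t + a) * (c - (d * t + a))
      nlinarith
    · have h3 : 0 ≤ (b - (d * t + a)) * (c - a) := mul_nonneg (by linarith) (by linarith)
      have h4 : 0 ≤ (d * t + a) * (d * t + a - a) :=
        mul_nonneg (by linarith) (by linarith)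
      show (d * t + a) * (c - (d * t + a)) ≤ b * (c - a)
      nlinarith
  set H : ℝ → ℝ := fun t => 1 / (Real.sqrt (t * (1 - t)) * Real.sqrt (g t)) with hHdef
  set F : ℝ → ℝ := fun x => 1 / Real.sqrt (x ^ 2 * (1 - x) ^ 2 - 4 * z * x) with hFdef
  have hsub : ∫ t in (0:ℝ)..1, F (d * t + a) = d⁻¹ • ∫ x in (d * 0 + a)..(d * 1 + a), F x :=
    intervalIntegral.integral_comp_mul_add F hd.ne' a
  have hend0 : d * 0 + a = a := by ring
  have hend1 : d * 1 + a = b := by rw [hddef]; ring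
  rw [hend0, hend1] at hsub
  have hcongr : EqOn (fun t => F (d * t + a)) (fun t => d⁻¹ * H t) (Set.uIcc (0:ℝ) 1) := by
    intro t ht
    rw [Set.uIcc_of_le zero_le_one] at ht
    obtain ⟨hx1, hx2⟩ := hx12 t ht
    obtain ⟨ht0, ht1⟩ := ht
    have harg : (d * t + a) ^ 2 * (1 - (d * t + a)) ^ 2 - 4 * z * (d * t + a)
        = d ^ 2 * ((t * (1 - t)) * g t) := by
      rw [factor_eq hz hz' (d * t + a), ← hadef, ← hbdef, ← hcdef]
      simp only [hgdef]
      have hb' : b = a + d := by rw [hddef]; ring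
      rw [hb']
      ring
    have ht' : (0:ℝ) ≤ t * (1 - t) := by nlinarith
    have hgt : (0:ℝ) ≤ g t := le_trans hm.le (hgb t ⟨ht0, ht1⟩).1
    simp only [hFdef, hHdef]
    rw [harg, Real.sqrt_mul (sq_nonneg d), Real.sqrt_sq hd.le,
      Real.sqrt_mul ht', one_div, one_div, mul_inv]
  have hstep : ∫ x in a..b, F x = ∫ t in (0:ℝ)..1, H t := by
    rw [intervalIntegral.integral_congr hcongr, intervalIntegral.integral_const_mul,
      smul_eq_mul] at hsub
    exact (mul_left_cancel₀ (inv_ne_zero hd.ne') hsub).symm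
  have hTfun : Tfun z = 2 * ∫ t in (0:ℝ)..1, H t := by
    have h0 : Tfun z = 2 * ∫ x in a..b, F x := by
      unfold Tfun
      rw [← hadef, ← hbdef]
    rw [h0, hstep]
  have hsm : 0 < Real.sqrt m := Real.sqrt_pos.2 hm
  have hsM : 0 < Real.sqrt M := Real.sqrt_pos.2 hM
  have hpt : ∀ t ∈ Icc (0:ℝ) 1,
      (Real.sqrt M)⁻¹ * Kf t ≤ H t ∧ H t ≤ (Real.sqrt m)⁻¹ * Kf t := by
    intro t ht
    obtain ⟨hgl, hgu⟩ := hgb t ht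
    obtain ⟨ht0, ht1⟩ := ht
    by_cases h0 : Real.sqrt (t * (1 - t)) = 0
    · constructor <;> simp [hHdef, Kf, h0]
    · have hu : 0 < Real.sqrt (t * (1 - t)) :=
        lt_of_le_of_ne (Real.sqrt_nonneg _) (Ne.symm h0)
      have hg0 : 0 < Real.sqrt (g t) := Real.sqrt_pos.2 (hm.trans_le hgl)
      have hgM : Real.sqrt (g t) ≤ Real.sqrt M := Real.sqrt_le_sqrt hgu
      have hgm : Real.sqrt m ≤ Real.sqrt (g t) := Real.sqrt_le_sqrt hgl
      constructor
      · have e1 : (Real.sqrt M)⁻¹ * Kf t = 1 / (Real.sqrt (t * (1 - t)) * Real.sqrt M) := by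
          unfold Kf; rw [one_div, one_div, mul_inv, mul_comm]
        rw [e1]
        show _ ≤ 1 / (Real.sqrt (t * (1 - t)) * Real.sqrt (g t))
        exact one_div_le_one_div_of_le (mul_pos hu hg0)
          (mul_le_mul_of_nonneg_left hgM hu.le)
      · have e2 : (Real.sqrt m)⁻¹ * Kf t = 1 / (Real.sqrt (t * (1 - t)) * Real.sqrt m) := by
          unfold Kf; rw [one_div, one_div, mul_inv, mul_comm]
        rw [e2]
        show 1 / (Real.sqrt (t * (1 - t)) * Real.sqrt (g t)) ≤ _
        exact one_div_le_one_div_of_le (mul_pos hu hsm)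
          (mul_le_mul_of_nonneg_left hgm hu.le)
  have hgcont : Continuous g := by
    rw [hgdef]
    exact ((continuous_const.mul continuous_id).add continuous_const).mul
      (continuous_const.sub ((continuous_const.mul continuous_id).add continuous_const))
  have hc1 : Continuous fun t : ℝ => Real.sqrt (t * (1 - t)) :=
    Real.continuous_sqrt.comp (continuous_id.mul (continuous_const.sub continuous_id))
  have hHmeas : Measurable H := by
    simp only [hHdef, one_div]
    exact (hc1.measurable.mul ((Real.continuous_sqrt.comp hgcont).measurable)).inv
  have hHnonneg : ∀ t, 0 ≤ H t := fun t => by simp only [hHdef]; positivity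
  have hupper_int : IntervalIntegrable (fun t => (Real.sqrt m)⁻¹ * Kf t) volume 0 1 :=
    Kf_int.const_mul _
  have hlower_int : IntervalIntegrable (fun t => (Real.sqrt M)⁻¹ * Kf t) volume 0 1 :=
    Kf_int.const_mul _
  have hHint : IntervalIntegrable H volume 0 1 := by
    refine hupper_int.mono_fun' hHmeas.aestronglyMeasurable ?_
    rw [Filter.EventuallyLE, ae_restrict_iff' measurableSet_uIoc]
    refine Filter.Eventually.of_forall fun t ht => ?_
    rw [Set.uIoc_of_le zero_le_one] at ht
    rw [Real.norm_of_nonneg (hHnonneg t)]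
    exact (hpt t ⟨ht.1.le, ht.2⟩).2
  have hlo := intervalIntegral.integral_mono_on zero_le_one hlower_int hHint
    (fun t ht => (hpt t ht).1)
  have hhi := intervalIntegral.integral_mono_on zero_le_one hHint hupper_int
    (fun t ht => (hpt t ht).2)
  rw [intervalIntegral.integral_const_mul, Kf_integral] at hlo
  rw [intervalIntegral.integral_const_mul, Kf_integral] at hhi
  constructor
  · rw [hTfun]
    have : 2 * π / Real.sqrt M = 2 * ((Real.sqrt M)⁻¹ * π) := by ring
    rw [this]
    linarith
  · rw [hTfun]
    have : 2 * π / Real.sqrt m = 2 * ((Real.sqrt m)⁻¹ * π) := by ring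
    rw [this]
    linarith

end bound

attribute [local fun_prop] Real.continuous_arccos

lemma theta_one : theta 1 = 0 := by
  unfold theta; norm_num [Real.arccos_one]

lemma xminf_at : xminf (1/27) = 1/3 := by
  unfold xminf
  norm_num [theta_one, Real.sin_pi_div_six]

lemma xmaxf_at : xmaxf (1/27) = 1/3 := by
  unfold xmaxf
  norm_num [theta_one, Real.sin_pi_div_six]

lemma xaddf_at : xaddf (1/27) = 4/3 := by
  unfold xaddf
  norm_num [theta_one, Real.cos_zero]

lemma cont_xminf : Continuous xminf := by unfold xminf theta; fun_prop
lemma cont_xmaxf : Continuous xmaxf := by unfold xmaxf theta; fun_prop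
lemma cont_xaddf : Continuous xaddf := by unfold xaddf theta; fun_prop

lemma sqrt13 : Real.sqrt ((1:ℝ)/3) = (Real.sqrt 3)⁻¹ := by
  rw [show (1:ℝ)/3 = (3:ℝ)⁻¹ by norm_num, Real.sqrt_inv]

lemma sqrt3_ne : (Real.sqrt 3)⁻¹ ≠ 0 :=
  inv_ne_zero (Real.sqrt_ne_zero'.2 (by norm_num))

lemma tendsto_bound_min :
    Tendsto (fun z => 2 * π / Real.sqrt (xmaxf z * (xaddf z - xminf z)))
      (nhds (1/27 : ℝ)) (nhds (2 * π * Real.sqrt 3)) := by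
  have key : Tendsto (fun z => xmaxf z * (xaddf z - xminf z)) (nhds (1/27 : ℝ))
      (nhds (1/3)) := by
    have h := (cont_xmaxf.mul (cont_xaddf.sub cont_xminf)).tendsto (1/27 : ℝ)
    simp only [Pi.mul_apply, Pi.sub_apply] at h
    rw [xminf_at, xmaxf_at, xaddf_at] at h
    convert h using 2
    all_goals norm_num
  have hs : Tendsto (fun z => Real.sqrt (xmaxf z * (xaddf z - xminf z))) (nhds (1/27 : ℝ))
      (nhds ((Real.sqrt 3)⁻¹)) := by
    rw [← sqrt13]
    exact (Real.continuous_sqrt.tendsto _).comp key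
  have h2 := Tendsto.div (tendsto_const_nhds (x := 2 * π)) hs sqrt3_ne
  have heq : 2 * π / (Real.sqrt 3)⁻¹ = 2 * π * Real.sqrt 3 := by
    rw [div_eq_mul_inv, inv_inv]
  rw [heq] at h2
  exact h2

lemma tendsto_bound_max :
    Tendsto (fun z => 2 * π / Real.sqrt (xminf z * (xaddf z - xmaxf z)))
      (nhds (1/27 : ℝ)) (nhds (2 * π * Real.sqrt 3)) := by
  have key : Tendsto (fun z => xminf z * (xaddf z - xmaxf z)) (nhds (1/27 : ℝ))
      (nhds (1/3)) := by
    have h := (cont_xminf.mul (cont_xaddf.sub cont_xmaxf)).tendsto (1/27 : ℝ)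
    simp only [Pi.mul_apply, Pi.sub_apply] at h
    rw [xminf_at, xmaxf_at, xaddf_at] at h
    convert h using 2
    all_goals norm_num
  have hs : Tendsto (fun z => Real.sqrt (xminf z * (xaddf z - xmaxf z))) (nhds (1/27 : ℝ))
      (nhds ((Real.sqrt 3)⁻¹)) := by
    rw [← sqrt13]
    exact (Real.continuous_sqrt.tendsto _).comp key
  have h2 := Tendsto.div (tendsto_const_nhds (x := 2 * π)) hs sqrt3_ne
  have heq : 2 * π / (Real.sqrt 3)⁻¹ = 2 * π * Real.sqrt 3 := by
    rw [div_eq_mul_inv, inv_inv]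
  rw [heq] at h2
  exact h2

/-- T(z) → 2π√3 as z → (1/27)⁻. -/
theorem stmt_10 :
    Tendsto Tfun (nhdsWithin (1 / 27) (Iio (1 / 27))) (nhds (2 * π * Real.sqrt 3)) := by
  have hmem : Ioo (0:ℝ) (1/27) ∈ nhdsWithin (1/27 : ℝ) (Iio (1/27)) :=
    Ioo_mem_nhdsLT_of_mem (by norm_num : (1/27:ℝ) ∈ Ioc (0:ℝ) (1/27))
  refine tendsto_of_tendsto_of_tendsto_of_le_of_le'
    (tendsto_bound_min.mono_left nhdsWithin_le_nhds)
    (tendsto_bound_max.mono_left nhdsWithin_le_nhds) ?_ ?_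
  · filter_upwards [hmem] with w hw
    exact (Tfun_bounds hw.1 hw.2).1
  · filter_upwards [hmem] with w hw
    exact (Tfun_bounds hw.1 hw.2).2
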